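/- With C constructed as C := 4·1 − B⁻ followed by setting C_{ij} := 0 for all (i,j) with y_{ij} = 1 and B⁺_{ij} = 0 (where ⟨B⁺,B⁻⟩=0, ⟨B⁺,1⟩=⟨B⁻,1⟩>0, and ⟨B⁺,y⟩ ≤ 2), one has ⟨B⁺, C⟩ − ⟨B⁻, C⟩ ≥ ⟨B⁻, B⁻⟩ > 0. -/
import Mathlib


/-- A directed Hamiltonian cycle (tour) on `n` vertices, identified with its
characteristic 0/1-matrix: `x i j = 1` iff the arc `(i,j)` is in the cycle. -/
def IsTour (n : ℕ) (x : Fin n → Fin n → ℤ) : Prop :=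
  ∃ σ : Equiv.Perm (Fin n), σ.IsCycle ∧ σ.support = Finset.univ ∧
    ∀ i j, x i j = if σ i = j then 1 else 0

/-- Standard inner product of two `n × n` integer matrices/vectors. -/
def ip {n : ℕ} (x C : Fin n → Fin n → ℤ) : ℤ :=
  ∑ i, ∑ j, x i j * C i j

/-- With `C := 4·1 - B⁻` zeroed on `S = {(i,j) : y i j = 1, B⁺ i j = 0}`,
one has `⟨B⁺, C⟩ - ⟨B⁻, C⟩ ≥ ⟨B⁻, B⁻⟩ > 0`. -/
theorem stmt3 (n : ℕ) (y Bp Bm : Fin n → Fin n → ℤ)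
    (hy : IsTour n y)
    (hBp : ∀ i j, Bp i j = 0 ∨ Bp i j = 1)
    (hBm : ∀ i j, Bm i j = 0 ∨ Bm i j = 1)
    (horth : ip Bp Bm = 0)
    (heq : ip Bp (fun _ _ => 1) = ip Bm (fun _ _ => 1))
    (hpos : 0 < ip Bp (fun _ _ => 1))
    (hy2 : ip Bp y ≤ 2)
    (C : Fin n → Fin n → ℤ)
    (hC : ∀ i j, C i j = if y i j = 1 ∧ Bp i j = 0 then 0 else 4 - Bm i j) :
    ip Bm Bm ≤ ip Bp C - ip Bm C ∧ 0 < ip Bm Bm := by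

  -- pointwise orthogonality
  have hnn : ∀ i j, (0:ℤ) ≤ Bp i j * Bm i j := by
    intro i j
    rcases hBp i j with hp | hp <;> rcases hBm i j with hm | hm <;> simp [hp, hm]
  have hrow : ∀ i ∈ (Finset.univ : Finset (Fin n)),
      ∑ j, Bp i j * Bm i j = 0 := by
    have := (Finset.sum_eq_zero_iff_of_nonneg (fun i _ =>
      Finset.sum_nonneg (fun j _ => hnn i j))).mp horth
    exact this
  have hprod : ∀ i j, Bp i j * Bm i j = 0 := by
    intro i j
    exact (Finset.sum_eq_zero_iff_of_nonneg (fun j _ => hnn i j)).mp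
      (hrow i (Finset.mem_univ i)) j (Finset.mem_univ j)
  have key : ∀ i j, Bm i j * Bm i j + 4 * Bp i j - 4 * Bm i j
      ≤ Bp i j * C i j - Bm i j * C i j := by
    intro i j
    have h := hprod i j
    rw [hC i j]
    rcases hBp i j with hp | hp <;> rcases hBm i j with hm | hm <;>
      simp [hp, hm] at h ⊢ <;> split <;> norm_num
  have h1 : ∑ i, ∑ j, (Bm i j * Bm i j + 4 * Bp i j - 4 * Bm i j)
      ≤ ∑ i, ∑ j, (Bp i j * C i j - Bm i j * C i j) :=
    Finset.sum_le_sum (fun i _ => Finset.sum_le_sum (fun j _ => key i j))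
  have e1 : ∑ i, ∑ j, (Bm i j * Bm i j + 4 * Bp i j - 4 * Bm i j)
      = ip Bm Bm + 4 * ip Bp (fun _ _ => 1) - 4 * ip Bm (fun _ _ => 1) := by
    simp [ip, Finset.sum_add_distrib, Finset.sum_sub_distrib, Finset.mul_sum]
  have e2 : ∑ i, ∑ j, (Bp i j * C i j - Bm i j * C i j)
      = ip Bp C - ip Bm C := by
    simp [ip, Finset.sum_sub_distrib]
  have hsq : ip Bm Bm = ip Bm (fun _ _ => 1) := by
    unfold ip
    refine Finset.sum_congr rfl (fun i _ => Finset.sum_congr rfl (fun j _ => ?_))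
    rcases hBm i j with hm | hm <;> simp [hm]
  constructor
  · rw [e1, e2, heq] at h1
    linarith
  · rw [hsq, ← heq]
    exact hpos
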